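/- For each k ≥ 2 let p = 1/k and let M(k) be the maximum over t > 0 of ρ(t) = [1 + (k−1)e^{−2st}]/[1 + (k−1)e^{−2rt}] with r = 2s, s > 0 fixed. Then M(k) = (√k + 1)/2; in particular M(k)/√k → 1/2 as k → ∞. -/

import Mathlib

theorem stmt_19 (s : ℝ) (hs : 0 < s) :
    (∀ k : ℕ, 2 ≤ k →
      IsGreatest ((fun t : ℝ => (1 + (k - 1 : ℝ) * Real.exp (-(2 * s * t))) /
          (1 + (k - 1 : ℝ) * Real.exp (-(2 * (2 * s) * t)))) '' Set.Ioi 0)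
        ((Real.sqrt k + 1) / 2)) ∧
    Filter.Tendsto (fun k : ℕ => ((Real.sqrt k + 1) / 2) / Real.sqrt k)
      Filter.atTop (nhds (1 / 2)) := by
  constructor
  · intro k hk
    set a := Real.sqrt k with ha
    have hk2 : (2:ℝ) ≤ (k:ℝ) := by exact_mod_cast hk
    have ha2 : a ^ 2 = k := Real.sq_sqrt (by linarith)
    have ha0 : 0 ≤ a := Real.sqrt_nonneg _
    have ha1 : 1 < a := by nlinarith
    have hkk : (k:ℝ) = a ^ 2 := ha2.symm
    constructor
    · refine ⟨Real.log (a + 1) / (2 * s), ?_, ?_⟩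
      · have : 0 < Real.log (a+1) := Real.log_pos (by linarith)
        simp only [Set.mem_Ioi]
        positivity
      · have hst : 2 * s * (Real.log (a + 1) / (2 * s)) = Real.log (a+1) := by
          field_simp
        have he1 : Real.exp (-(2 * s * (Real.log (a + 1) / (2 * s)))) = (a+1)⁻¹ := by
          rw [hst, Real.exp_neg, Real.exp_log (by linarith)]
        have he2 : Real.exp (-(2 * (2*s) * (Real.log (a + 1) / (2 * s)))) = ((a+1)*(a+1))⁻¹ := by
          have h : -(2 * (2*s) * (Real.log (a + 1) / (2 * s)))
              = (-(2 * s * (Real.log (a + 1) / (2 * s)))) + (-(2 * s * (Real.log (a + 1) / (2 * s)))) := by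
            ring
          rw [h, Real.exp_add, he1, mul_inv]
        simp only [he1, he2, hkk]
        have hpos : (0:ℝ) < a + 1 := by linarith
        have hinv : 0 < ((a+1)*(a+1))⁻¹ := by positivity
        have ha21 : 0 < a^2 - 1 := by nlinarith
        rw [div_eq_div_iff (by nlinarith [mul_pos ha21 hinv] : (0:ℝ) < 1 + (a^2-1) * ((a+1)*(a+1))⁻¹).ne' (two_ne_zero)]
        field_simp
        ring
    · rintro y ⟨t, ht, rfl⟩
      simp only
      have hx0 : 0 < Real.exp (-(2*s*t)) := Real.exp_pos _
      set x := Real.exp (-(2*s*t)) with hx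
      have hx2 : Real.exp (-(2*(2*s)*t)) = x * x := by
        rw [hx, ← Real.exp_add]
        ring_nf
      rw [hx2, hkk]
      have hden : 0 < 1 + (a^2 - 1) * (x * x) := by nlinarith
      rw [div_le_div_iff₀ hden (by norm_num)]
      nlinarith [mul_nonneg (sub_nonneg.2 ha1.le) (sq_nonneg ((a+1)*x - 1))]
  · have h2 : Filter.Tendsto (fun k : ℕ => (Real.sqrt k)⁻¹) Filter.atTop (nhds 0) := by
      have := (Real.continuous_sqrt.tendsto 0).comp tendsto_inv_atTop_nhds_zero_nat
      simpa [Function.comp_def, Real.sqrt_inv] using this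
    have h3 : Filter.Tendsto (fun k : ℕ => 1/2 + (Real.sqrt k)⁻¹ / 2) Filter.atTop
        (nhds (1/2)) := by
      have := (h2.div_const 2).const_add (1/2 : ℝ)
      simpa using this
    refine h3.congr' ?_
    filter_upwards [Filter.eventually_ge_atTop 1] with k hk
    have hsk : 0 < Real.sqrt k := Real.sqrt_pos.2 (by exact_mod_cast Nat.pos_of_ne_zero (by omega))
    rw [eq_comm, div_eq_iff hsk.ne']
    field_simp
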